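/- Let W ∈ 𝕎_{τ_n} be a τ_n-block diagonalizer of 𝒜 = {A_i}_{i=1}^m with Wᵀ A_i W = diag(A_i^{(11)},…,A_i^{(tt)}), and let 𝒜_j = {A_i^{(jj)}}_{i=1}^m. Suppose dim 𝒩(𝒜_j) = 1 for all 1 ≤ j ≤ t. If ω_uniq(𝒜;W) = min_{1≤j<k≤t} σ_min(G_{jk}) > 0, then 𝒜 is uniquely τ_n-block diagonalizable. -/

import Mathlib

open Matrix BigOperators Kronecker
open scoped ENNReal

namespace JBD

/-- Index type for `τ_n`-block partitioned `n×n` matrices, where the partition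
`τ_n = (n 0, …, n (t-1))`. -/
abbrev BlkIdx {t : ℕ} (n : Fin t → ℕ) := Σ j : Fin t, Fin (n j)

variable {t : ℕ} {n : Fin t → ℕ}

/-- The `τ_n`-block diagonal part `Bdiag_{τ_n}(A)`. -/
def bdiag (A : Matrix (BlkIdx n) (BlkIdx n) ℝ) : Matrix (BlkIdx n) (BlkIdx n) ℝ :=
  fun p q => if p.1 = q.1 then A p q else 0

/-- The `τ_n`-off-block diagonal part `OffBdiag_{τ_n}(A)`. -/
def offBdiag (A : Matrix (BlkIdx n) (BlkIdx n) ℝ) : Matrix (BlkIdx n) (BlkIdx n) ℝ :=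
  A - bdiag A

/-- `A ∈ 𝔻_{τ_n}`, i.e. `A` is `τ_n`-block diagonal. -/
def IsBlockDiag (A : Matrix (BlkIdx n) (BlkIdx n) ℝ) : Prop :=
  ∀ p q : BlkIdx n, p.1 ≠ q.1 → A p q = 0

/-- `P` is a permutation matrix. -/
def IsPermMatrix {I : Type*} [DecidableEq I] [Fintype I] (P : Matrix I I ℝ) : Prop :=
  ∃ σ : Equiv.Perm I, P = σ.permMatrix ℝ

/-- `P ∈ ℙ_{τ_n}`: a `τ_n`-block diagonal preserving permutation matrix. -/
def IsBDPerm (P : Matrix (BlkIdx n) (BlkIdx n) ℝ) : Prop :=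
  IsPermMatrix P ∧
    ∀ D : Matrix (BlkIdx n) (BlkIdx n) ℝ, IsBlockDiag D → IsBlockDiag (Pᵀ * D * P)

/-- `W ∈ 𝕎_{τ_n}`: nonsingular with `Bdiag_{τ_n}(Wᵀ W) = I`. -/
def MemW (W : Matrix (BlkIdx n) (BlkIdx n) ℝ) : Prop :=
  IsUnit W ∧ bdiag (Wᵀ * W) = 1

/-- `W` is a `τ_n`-block diagonalizer of the matrix set `𝒜 = {A i}`. -/
def IsDiagonalizer {m : ℕ} (A : Fin m → Matrix (BlkIdx n) (BlkIdx n) ℝ)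
    (W : Matrix (BlkIdx n) (BlkIdx n) ℝ) : Prop :=
  IsUnit W ∧ ∀ i, IsBlockDiag (Wᵀ * A i * W)

/-- The JBDP for `𝒜` is uniquely `τ_n`-block diagonalizable. -/
def UniquelyBD {m : ℕ} (A : Fin m → Matrix (BlkIdx n) (BlkIdx n) ℝ) : Prop :=
  (∃ W, IsDiagonalizer A W) ∧
    ∀ W W', IsDiagonalizer A W → IsDiagonalizer A W' →
      ∃ D P : Matrix (BlkIdx n) (BlkIdx n) ℝ,
        IsBlockDiag D ∧ IsUnit D ∧ IsBDPerm P ∧ W' = W * D * P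

/-- The `j`-th diagonal block of a `τ_n`-partitioned matrix. -/
def dblock (A : Matrix (BlkIdx n) (BlkIdx n) ℝ) (j : Fin t) :
    Matrix (Fin (n j)) (Fin (n j)) ℝ := fun x y => A ⟨j, x⟩ ⟨j, y⟩

/-- A family `B = {B i}` of `N×N` matrices can be (further) simultaneously block
diagonalized by congruence, with respect to some partition of `N` of cardinality `≥ 2`. -/
def CanSplit {N m : ℕ} (B : Fin m → Matrix (Fin N) (Fin N) ℝ) : Prop :=
  ∃ (s : ℕ) (k : Fin s → ℕ), 2 ≤ s ∧ (∀ j, 0 < k j) ∧ (∑ j, k j) = N ∧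
    ∃ (e : Fin N ≃ BlkIdx k) (V : Matrix (Fin N) (Fin N) ℝ), IsUnit V ∧
      ∀ i, IsBlockDiag (Matrix.reindex e e (Vᵀ * B i * V))

/-- The subspace `𝒩(ℬ) = {Z : B i * Z - Zᵀ * B i = 0 for all i}`. -/
def nSubmodule {m : ℕ} {I : Type*} [Fintype I] (B : Fin m → Matrix I I ℝ) :
    Submodule ℝ (Matrix I I ℝ) where
  carrier := {Z | ∀ i, B i * Z - Zᵀ * B i = 0}
  add_mem' := by
    intro a b ha hb i
    have h1 := ha i
    have h2 := hb i
    have : (B i * a - aᵀ * B i) + (B i * b - bᵀ * B i) = 0 := by rw [h1, h2, add_zero]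
    calc B i * (a + b) - (a + b)ᵀ * B i
        = (B i * a - aᵀ * B i) + (B i * b - bᵀ * B i) := by
          rw [Matrix.mul_add, Matrix.transpose_add, Matrix.add_mul]; abel
      _ = 0 := this
  zero_mem' := by intro i; simp
  smul_mem' := by
    intro c Z hZ i
    have h := hZ i
    calc B i * (c • Z) - (c • Z)ᵀ * B i = c • (B i * Z - Zᵀ * B i) := by
          rw [Matrix.mul_smul, Matrix.transpose_smul, Matrix.smul_mul, smul_sub]
      _ = 0 := by rw [h, smul_zero]

/-- Frobenius norm. -/
noncomputable def frob {I J : Type*} [Fintype I] [Fintype J] (A : Matrix I J ℝ) : ℝ :=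
  Real.sqrt (∑ i, ∑ j, (A i j) ^ 2)

/-- Spectral norm (operator 2-norm). -/
noncomputable def spec {I : Type*} [Fintype I] [DecidableEq I] (A : Matrix I I ℝ) : ℝ :=
  ‖Matrix.toEuclideanCLM (𝕜 := ℝ) A‖

/-- Singular values of a real matrix: square roots of the eigenvalues of `Aᵀ * A`
(one for each column index). -/
noncomputable def sv {I J : Type*} [Fintype I] [Fintype J] [DecidableEq J]
    (A : Matrix I J ℝ) (k : J) : ℝ :=
  Real.sqrt ((show (Aᵀ * A).IsHermitian by
    rw [← Matrix.conjTranspose_eq_transpose_of_trivial]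
    exact Matrix.isHermitian_conjTranspose_mul_self A).eigenvalues k)

/-- The smallest singular value. -/
noncomputable def sigmaMin {I J : Type*} [Fintype I] [Fintype J] [DecidableEq J]
    (A : Matrix I J ℝ) : ℝ :=
  ⨅ k : J, sv A k

/-- The smallest nonzero singular value. -/
noncomputable def minNonzeroSV {I J : Type*} [Fintype I] [Fintype J] [DecidableEq J]
    (A : Matrix I J ℝ) : ℝ :=
  sInf {s | (∃ k, sv A k = s) ∧ s ≠ 0}

/-- The list of singular values sorted in increasing order. -/
noncomputable def svSorted {I J : Type*} [Fintype I] [Fintype J] [DecidableEq J]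
    (A : Matrix I J ℝ) : List ℝ :=
  (Finset.univ.val.map (sv A)).sort (· ≤ ·)

/-- The second smallest singular value. -/
noncomputable def secondSmallestSV {I J : Type*} [Fintype I] [Fintype J] [DecidableEq J]
    (A : Matrix I J ℝ) : ℝ :=
  (svSorted A).getD 1 0

/-- The matrix `G_{jk}` (for `j < k`), built from the diagonal blocks
`Aj i = A_i^{(jj)}` (size `a`) and `Ak i = A_i^{(kk)}` (size `b`). -/
noncomputable def Gjk {m a b : ℕ} (Aj : Fin m → Matrix (Fin a) (Fin a) ℝ)
    (Ak : Fin m → Matrix (Fin b) (Fin b) ℝ) :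
    Matrix (Fin m × ((Fin b × Fin a) ⊕ (Fin b × Fin a))) ((Fin b × Fin a) ⊕ (Fin b × Fin a)) ℝ :=
  fun r c =>
    Matrix.fromBlocks
      ((1 : Matrix (Fin b) (Fin b) ℝ) ⊗ₖ Aj r.1) ((Ak r.1)ᵀ ⊗ₖ (1 : Matrix (Fin a) (Fin a) ℝ))
      ((1 : Matrix (Fin b) (Fin b) ℝ) ⊗ₖ (Aj r.1)ᵀ) (Ak r.1 ⊗ₖ (1 : Matrix (Fin a) (Fin a) ℝ))
      r.2 c

/-- Column-major vectorization: `vecM Z (c, r) = Z r c`. -/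
def vecM {a b : ℕ} (Z : Matrix (Fin a) (Fin b) ℝ) : Fin b × Fin a → ℝ :=
  fun p => Z p.2 p.1

/-- The perfect-shuffle permutation matrix `Π_j`, satisfying
`shuffle a *ᵥ vecM Zᵀ = vecM Z`. -/
def shuffle (a : ℕ) : Matrix (Fin a × Fin a) (Fin a × Fin a) ℝ :=
  fun p q => if q = p.swap then 1 else 0

/-- The matrix `G_{jj}`, built from the diagonal blocks `Aj i = A_i^{(jj)}` (size `a`):
its `i`-th block row is `I ⊗ Aj i - ((Aj i)ᵀ ⊗ I) * Π_j`. -/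
noncomputable def Gjj {m a : ℕ} (Aj : Fin m → Matrix (Fin a) (Fin a) ℝ) :
    Matrix (Fin m × (Fin a × Fin a)) (Fin a × Fin a) ℝ :=
  fun r c =>
    ((1 : Matrix (Fin a) (Fin a) ℝ) ⊗ₖ Aj r.1
      - ((Aj r.1)ᵀ ⊗ₖ (1 : Matrix (Fin a) (Fin a) ℝ)) * shuffle a) r.2 c

/-- The matrix `M_{jk}` from Theorem 2.1, `M_{jk} = G_{jk}ᵀ G_{jk}`. -/
noncomputable def Mjk {m a b : ℕ} (Aj : Fin m → Matrix (Fin a) (Fin a) ℝ)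
    (Ak : Fin m → Matrix (Fin b) (Fin b) ℝ) :
    Matrix ((Fin b × Fin a) ⊕ (Fin b × Fin a)) ((Fin b × Fin a) ⊕ (Fin b × Fin a)) ℝ :=
  ∑ i, Matrix.fromBlocks
    ((1 : Matrix (Fin b) (Fin b) ℝ) ⊗ₖ ((Aj i)ᵀ * Aj i + Aj i * (Aj i)ᵀ))
    (Ak i ⊗ₖ Aj i + (Ak i)ᵀ ⊗ₖ (Aj i)ᵀ)
    (Ak i ⊗ₖ Aj i + (Ak i)ᵀ ⊗ₖ (Aj i)ᵀ)
    (((Ak i)ᵀ * Ak i + Ak i * (Ak i)ᵀ) ⊗ₖ (1 : Matrix (Fin a) (Fin a) ℝ))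

/-- The modulus of uniqueness `ω_uniq = min_{j<k} σ_min(G_{jk})`, in terms of the
family of diagonal blocks `Ab j i = A_i^{(jj)}`. -/
noncomputable def omegaUniq {m : ℕ}
    (Ab : ∀ j : Fin t, Fin m → Matrix (Fin (n j)) (Fin (n j)) ℝ) : ℝ :=
  ⨅ p : {p : Fin t × Fin t // p.1 < p.2}, sigmaMin (Gjk (Ab p.1.1) (Ab p.1.2))

/-- The modulus of non-divisibility `ω_rob` (`+∞` when `τ_n = (1,…,1)`), in terms of
the family of diagonal blocks `Ab j i = A_i^{(jj)}`. -/
noncomputable def omegaRob {m : ℕ}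
    (Ab : ∀ j : Fin t, Fin m → Matrix (Fin (n j)) (Fin (n j)) ℝ) : ℝ≥0∞ :=
  ⨅ (j : Fin t) (_ : 1 < n j), ENNReal.ofReal (minNonzeroSV (Gjj (Ab j)))

/-- The matrix `Γ = diag(γ_1 I_{n_1}, …, γ_t I_{n_t})`. -/
def gmat (γ : Fin t → ℝ) : Matrix (BlkIdx n) (BlkIdx n) ℝ :=
  Matrix.diagonal (fun p => γ p.1)

/-- The gap `g = min_{j ≠ k} |γ_j - γ_k|`. -/
noncomputable def gammaGap (γ : Fin t → ℝ) : ℝ :=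
  ⨅ p : {p : Fin t × Fin t // p.1 ≠ p.2}, |γ p.1.1 - γ p.1.2|

/-- The multiset of complex eigenvalues (with algebraic multiplicity) of a real
square matrix: the roots of its characteristic polynomial over `ℂ`. -/
noncomputable def eigMultiset {I : Type*} [Fintype I] [DecidableEq I]
    (Z : Matrix I I ℝ) : Multiset ℂ :=
  (Z.map (Complex.ofReal)).charpoly.roots

/-- The `j`-th block column of `P`, with its `j`-th (diagonal) block replaced by `0`:
the matrix `P̂_j`. -/
def hatColumn (P : Matrix (BlkIdx n) (BlkIdx n) ℝ) (j : Fin t) :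
    Matrix (BlkIdx n) (Fin (n j)) ℝ :=
  fun p y => if p.1 = j then 0 else P p ⟨j, y⟩



/-! ### Auxiliary lemmas for Statement 7 -/

section Aux7

variable {t : ℕ} {n : Fin t → ℕ}

/-- Block of a partitioned matrix. -/
def blkM (A : Matrix (BlkIdx n) (BlkIdx n) ℝ) (j k : Fin t) :
    Matrix (Fin (n j)) (Fin (n k)) ℝ := fun x y => A ⟨j, x⟩ ⟨k, y⟩

lemma sum_blk {β : Type*} [AddCommMonoid β] (f : BlkIdx n → β) :
    ∑ p : BlkIdx n, f p = ∑ j, ∑ x, f ⟨j, x⟩ := by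
  rw [← Finset.univ_sigma_univ, Finset.sum_sigma]

lemma blkM_mul (M N : Matrix (BlkIdx n) (BlkIdx n) ℝ) (j k : Fin t) :
    blkM (M * N) j k = ∑ q, blkM M j q * blkM N q k := by
  ext x y
  simp only [blkM, Matrix.mul_apply, Matrix.sum_apply]
  rw [sum_blk (fun p => M ⟨j,x⟩ p * N p ⟨k,y⟩)]

lemma blkM_transpose (M : Matrix (BlkIdx n) (BlkIdx n) ℝ) (j k : Fin t) :
    blkM Mᵀ j k = (blkM M k j)ᵀ := rfl

lemma blkM_zero_of_bd {D : Matrix (BlkIdx n) (BlkIdx n) ℝ} (hD : IsBlockDiag D)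
    {j k : Fin t} (h : j ≠ k) : blkM D j k = 0 := by
  ext x y; exact hD _ _ h

lemma isBlockDiag_transpose {D : Matrix (BlkIdx n) (BlkIdx n) ℝ} (hD : IsBlockDiag D) :
    IsBlockDiag Dᵀ := fun p q h => hD q p h.symm

lemma blkM_mul_bd {D : Matrix (BlkIdx n) (BlkIdx n) ℝ} (hD : IsBlockDiag D)
    (M : Matrix (BlkIdx n) (BlkIdx n) ℝ) (j k : Fin t) :
    blkM (M * D) j k = blkM M j k * blkM D k k := by
  rw [blkM_mul]
  rw [Finset.sum_eq_single k]
  · intro q _ hq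
    rw [blkM_zero_of_bd hD hq, Matrix.mul_zero]
  · intro h; exact absurd (Finset.mem_univ k) h

lemma bd_mul_blkM {D : Matrix (BlkIdx n) (BlkIdx n) ℝ} (hD : IsBlockDiag D)
    (M : Matrix (BlkIdx n) (BlkIdx n) ℝ) (j k : Fin t) :
    blkM (D * M) j k = blkM D j j * blkM M j k := by
  rw [blkM_mul]
  rw [Finset.sum_eq_single j]
  · intro q _ hq
    rw [blkM_zero_of_bd hD (Ne.symm hq), Matrix.zero_mul]
  · intro h; exact absurd (Finset.mem_univ j) h

lemma blkM_one_diag (j : Fin t) : blkM (1 : Matrix (BlkIdx n) (BlkIdx n) ℝ) j j = 1 := by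
  ext x y
  simp only [blkM, Matrix.one_apply]
  by_cases h : x = y
  · subst h; simp
  · rw [if_neg, if_neg h]
    intro hc
    exact h (eq_of_heq (Sigma.mk.inj_iff.mp hc).2)

lemma blkM_one_off {j k : Fin t} (h : j ≠ k) :
    blkM (1 : Matrix (BlkIdx n) (BlkIdx n) ℝ) j k = 0 := by
  ext x y
  simp only [blkM, Matrix.one_apply, Matrix.zero_apply]
  rw [if_neg]
  intro hc
  exact h (Sigma.mk.inj_iff.mp hc).1

lemma smul_one_inj {N : ℕ} (hN : 0 < N) {a b : ℝ}
    (h : a • (1 : Matrix (Fin N) (Fin N) ℝ) = b • 1) : a = b := by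
  have := congrFun (congrFun h ⟨0, hN⟩) ⟨0, hN⟩
  simpa using this

lemma isBlockDiag_mul {D E : Matrix (BlkIdx n) (BlkIdx n) ℝ} (hD : IsBlockDiag D)
    (hE : IsBlockDiag E) : IsBlockDiag (D * E) := by
  intro p q h
  rw [Matrix.mul_apply]
  apply Finset.sum_eq_zero
  intro r _
  by_cases hr : p.1 = r.1
  · rw [hE r q (hr ▸ h), mul_zero]
  · rw [hD p r hr, zero_mul]

lemma exists_smul_one_of_mem {m N : ℕ} (hN : 0 < N) (B : Fin m → Matrix (Fin N) (Fin N) ℝ)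
    (hdim : Module.finrank ℝ (nSubmodule B) = 1) {Z : Matrix (Fin N) (Fin N) ℝ}
    (hZ : Z ∈ nSubmodule B) : ∃ c : ℝ, Z = c • 1 := by
  haveI : Nonempty (Fin N) := ⟨⟨0, hN⟩⟩
  have h1 : (1 : Matrix (Fin N) (Fin N) ℝ) ∈ nSubmodule B := by
    intro i
    simp [nSubmodule]
  have hne : (1 : Matrix (Fin N) (Fin N) ℝ) ≠ 0 := one_ne_zero
  have hle : Submodule.span ℝ {(1 : Matrix (Fin N) (Fin N) ℝ)} ≤ nSubmodule B := by
    rw [Submodule.span_le, Set.singleton_subset_iff]; exact h1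
  have hrank : Module.finrank ℝ (Submodule.span ℝ {(1 : Matrix (Fin N) (Fin N) ℝ)}) = 1 :=
    finrank_span_singleton hne
  have heq : Submodule.span ℝ {(1 : Matrix (Fin N) (Fin N) ℝ)} = nSubmodule B := by
    apply Submodule.eq_of_le_of_finrank_le hle
    rw [hdim, hrank]
  rw [← heq] at hZ
  obtain ⟨c, hc⟩ := Submodule.mem_span_singleton.mp hZ
  exact ⟨c, hc.symm⟩

lemma sv_nonneg {I J : Type*} [Fintype I] [Fintype J] [DecidableEq J]
    (A : Matrix I J ℝ) (k : J) : 0 ≤ sv A k := Real.sqrt_nonneg _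

lemma sigmaMin_nonneg {I J : Type*} [Fintype I] [Fintype J] [DecidableEq J]
    (A : Matrix I J ℝ) : 0 ≤ sigmaMin A := Real.iInf_nonneg (sv_nonneg A)

lemma eq_zero_of_mulVec_eq_zero_of_sigmaMin_pos {I J : Type*} [Fintype I] [Fintype J]
    [DecidableEq J] {G : Matrix I J ℝ} (h : 0 < sigmaMin G) {v : J → ℝ}
    (hv : G.mulVec v = 0) : v = 0 := by
  have hherm : (Gᵀ * G).IsHermitian := by
    rw [← Matrix.conjTranspose_eq_transpose_of_trivial]
    exact Matrix.isHermitian_conjTranspose_mul_self G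
  have heig : ∀ k, 0 < hherm.eigenvalues k := by
    intro k
    have h1 : sigmaMin G ≤ sv G k := by
      apply ciInf_le ⟨0, ?_⟩
      rintro x ⟨k', rfl⟩
      exact sv_nonneg G k'
    exact Real.sqrt_pos.mp (lt_of_lt_of_le h h1)
  have hdet : IsUnit (Gᵀ * G).det := by
    rw [hherm.det_eq_prod_eigenvalues]
    refine (Finset.prod_pos fun k _ => ?_).ne'.isUnit
    exact_mod_cast heig k
  have h0 : (Gᵀ * G).mulVec v = 0 := by
    rw [← Matrix.mulVec_mulVec, hv, Matrix.mulVec_zero]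
  calc v = (1 : Matrix J J ℝ).mulVec v := by rw [Matrix.one_mulVec]
    _ = ((Gᵀ * G)⁻¹ * (Gᵀ * G)).mulVec v := by rw [Matrix.nonsing_inv_mul _ hdet]
    _ = (Gᵀ * G)⁻¹.mulVec ((Gᵀ * G).mulVec v) := by rw [Matrix.mulVec_mulVec]
    _ = 0 := by rw [h0, Matrix.mulVec_zero]

lemma Gjk_trivial_kernel {m a b : ℕ} {Aj : Fin m → Matrix (Fin a) (Fin a) ℝ}
    {Ak : Fin m → Matrix (Fin b) (Fin b) ℝ} (hpos : 0 < sigmaMin (Gjk Aj Ak))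
    (Z1 : Matrix (Fin a) (Fin b) ℝ) (Z2 : Matrix (Fin b) (Fin a) ℝ)
    (h1 : ∀ i, Aj i * Z1 = Z2ᵀ * Ak i) (h2 : ∀ i, (Aj i)ᵀ * Z1 = Z2ᵀ * (Ak i)ᵀ) :
    Z1 = 0 ∧ Z2 = 0 := by
  set u : ((Fin b × Fin a) ⊕ (Fin b × Fin a)) → ℝ :=
    Sum.elim (vecM Z1) (vecM (-Z2ᵀ)) with hu
  have hker : (Gjk Aj Ak).mulVec u = 0 := by
    funext r
    obtain ⟨i, s⟩ := r
    rcases s with ⟨c, r⟩ | ⟨c, r⟩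
    · have e1 := congrFun (congrFun (h1 i) r) c
      simp only [Matrix.mul_apply, Matrix.transpose_apply] at e1
      simp only [Gjk, Matrix.mulVec, dotProduct, hu, Fintype.sum_sum_type,
        Matrix.fromBlocks_apply₁₁, Matrix.fromBlocks_apply₁₂, Sum.elim_inl, Sum.elim_inr,
        Matrix.kroneckerMap_apply, Matrix.one_apply, vecM, Fintype.sum_prod_type,
        Matrix.transpose_apply, Matrix.neg_apply, Pi.zero_apply, ite_mul, one_mul, zero_mul,
        Finset.sum_ite_eq, Finset.mem_univ, if_true, mul_ite, mul_zero, mul_neg]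
      have A1 : (∑ x : Fin b, ∑ x_1 : Fin a, if c = x then Aj i r x_1 * Z1 x_1 x else 0)
          = ∑ x_1 : Fin a, Aj i r x_1 * Z1 x_1 c := by
        rw [Finset.sum_comm]; simp
      have A2 : (∑ x : Fin b, ∑ x_1 : Fin a, -if r = x_1 then Ak i x c * 1 * Z2 x x_1 else 0)
          = -∑ x : Fin b, Z2 x r * Ak i x c := by
        simp [mul_comm]
      rw [A1, A2, e1, add_neg_cancel]
    · have e2 := congrFun (congrFun (h2 i) r) c
      simp only [Matrix.mul_apply, Matrix.transpose_apply] at e2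
      simp only [Gjk, Matrix.mulVec, dotProduct, hu, Fintype.sum_sum_type,
        Matrix.fromBlocks_apply₂₁, Matrix.fromBlocks_apply₂₂, Sum.elim_inl, Sum.elim_inr,
        Matrix.kroneckerMap_apply, Matrix.one_apply, vecM, Fintype.sum_prod_type,
        Matrix.transpose_apply, Matrix.neg_apply, Pi.zero_apply, ite_mul, one_mul, zero_mul,
        Finset.sum_ite_eq, Finset.mem_univ, if_true, mul_ite, mul_zero, mul_neg]
      have A1 : (∑ x : Fin b, ∑ x_1 : Fin a, if c = x then Aj i x_1 r * Z1 x_1 x else 0)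
          = ∑ x_1 : Fin a, Aj i x_1 r * Z1 x_1 c := by
        rw [Finset.sum_comm]; simp
      have A2 : (∑ x : Fin b, ∑ x_1 : Fin a, -if r = x_1 then Ak i c x * 1 * Z2 x x_1 else 0)
          = -∑ x : Fin b, Z2 x r * Ak i c x := by
        simp [mul_comm]
      rw [A1, A2, e2, add_neg_cancel]
  have hu0 : u = 0 := eq_zero_of_mulVec_eq_zero_of_sigmaMin_pos hpos hker
  constructor
  · ext r c
    have := congrFun hu0 (Sum.inl (c, r))
    simpa [hu, vecM] using this
  · ext r c
    have := congrFun hu0 (Sum.inr (r, c))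
    simp only [hu, Sum.elim_inr, Pi.zero_apply, vecM, Matrix.neg_apply,
      Matrix.transpose_apply] at this
    simpa using neg_eq_zero.mp this

lemma sigmaMin_Gjk_pos {m : ℕ}
    {Ab : ∀ j : Fin t, Fin m → Matrix (Fin (n j)) (Fin (n j)) ℝ}
    (homega : 0 < omegaUniq Ab) {j k : Fin t} (hjk : j < k) :
    0 < sigmaMin (Gjk (Ab j) (Ab k)) := by
  have h1 : omegaUniq Ab ≤ sigmaMin (Gjk (Ab j) (Ab k)) := by
    have := ciInf_le
      (f := fun p : {p : Fin t × Fin t // p.1 < p.2} => sigmaMin (Gjk (Ab p.1.1) (Ab p.1.2)))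
      ⟨0, by rintro x ⟨p, rfl⟩; exact sigmaMin_nonneg _⟩ ⟨(j, k), hjk⟩
    exact this
  linarith

lemma permMatrix_apply {I : Type*} [DecidableEq I] [Fintype I] (σ : Equiv.Perm I) (p q : I) :
    σ.permMatrix ℝ p q = if q = σ p then 1 else 0 := by
  simp [Equiv.Perm.permMatrix, PEquiv.toMatrix_apply, Equiv.toPEquiv_apply, Option.mem_def,
    eq_comm]

lemma permMatrix_transpose_mul {I : Type*} [DecidableEq I] [Fintype I] (σ : Equiv.Perm I) :
    (σ.permMatrix ℝ)ᵀ * σ.permMatrix ℝ = 1 := by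
  ext p q
  rw [Matrix.mul_apply, Matrix.one_apply]
  simp only [Matrix.transpose_apply, permMatrix_apply]
  rw [Finset.sum_eq_single (σ.symm p)]
  · by_cases h : p = q
    · subst h; simp
    · rw [if_neg h, if_pos (by simp), if_neg]
      · rw [one_mul]
      · intro hc; exact h (by rw [← σ.apply_symm_apply p, ← hc])
  · intro r _ hr
    rw [if_neg, zero_mul]
    intro hc; exact hr (by rw [← σ.symm_apply_apply r, ← hc])
  · intro h; exact absurd (Finset.mem_univ _) h

lemma permMatrix_mul_transpose {I : Type*} [DecidableEq I] [Fintype I] (σ : Equiv.Perm I) :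
    σ.permMatrix ℝ * (σ.permMatrix ℝ)ᵀ = 1 :=
  mul_eq_one_comm.mp (permMatrix_transpose_mul σ)

lemma IsPermMatrix.transpose {I : Type*} [DecidableEq I] [Fintype I]
    {P : Matrix I I ℝ} (h : IsPermMatrix P) : IsPermMatrix Pᵀ := by
  obtain ⟨σ, rfl⟩ := h
  refine ⟨σ⁻¹, ?_⟩
  ext p q
  simp only [Matrix.transpose_apply, permMatrix_apply]
  by_cases h : p = σ q
  · rw [if_pos h, if_pos]; rw [h]; simp [Equiv.Perm.inv_def]
  · rw [if_neg h, if_neg]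
    intro hc
    exact h (by rw [hc]; simp)

lemma IsPermMatrix.mul {I : Type*} [DecidableEq I] [Fintype I]
    {P Q : Matrix I I ℝ} (hP : IsPermMatrix P) (hQ : IsPermMatrix Q) : IsPermMatrix (P * Q) := by
  obtain ⟨α, rfl⟩ := hP
  obtain ⟨β, rfl⟩ := hQ
  refine ⟨α.trans β, ?_⟩
  ext p q
  rw [Matrix.mul_apply]
  simp only [permMatrix_apply, Equiv.trans_apply]
  rw [Finset.sum_eq_single (α p)]
  · simp; congr
  · intro r _ hr
    rw [if_neg (fun hc => hr hc), zero_mul]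
  · intro h; exact absurd (Finset.mem_univ _) h

lemma conj_transpose_apply {I : Type*} [DecidableEq I] [Fintype I] (σ : Equiv.Perm I)
    (F : Matrix I I ℝ) (p q : I) :
    ((σ.permMatrix ℝ)ᵀ * F * σ.permMatrix ℝ) p q = F (σ.symm p) (σ.symm q) := by
  rw [Matrix.mul_apply]
  have h1 : ∀ r, ((σ.permMatrix ℝ)ᵀ * F) p r * σ.permMatrix ℝ r q
      = (if r = σ.symm q then ((σ.permMatrix ℝ)ᵀ * F) p r else 0) := by
    intro r
    rw [permMatrix_apply]
    by_cases h : q = σ r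
    · rw [if_pos h, if_pos (by rw [h]; simp), mul_one]
    · rw [if_neg h, if_neg, mul_zero]
      intro hc; exact h (by rw [hc]; simp)
  simp_rw [h1]
  rw [Finset.sum_ite_eq' Finset.univ (σ.symm q), if_pos (Finset.mem_univ _)]
  rw [Matrix.mul_apply]
  have h2 : ∀ r, (σ.permMatrix ℝ)ᵀ p r * F r (σ.symm q)
      = (if r = σ.symm p then F r (σ.symm q) else 0) := by
    intro r
    rw [Matrix.transpose_apply, permMatrix_apply]
    by_cases h : p = σ r
    · rw [if_pos h, if_pos (by rw [h]; simp), one_mul]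
    · rw [if_neg h, if_neg, zero_mul]
      intro hc; exact h (by rw [hc]; simp)
  simp_rw [h2]
  rw [Finset.sum_ite_eq' Finset.univ (σ.symm p), if_pos (Finset.mem_univ _)]

lemma conj_apply' {I : Type*} [DecidableEq I] [Fintype I] (σ : Equiv.Perm I)
    (F : Matrix I I ℝ) (p q : I) :
    (σ.permMatrix ℝ * F * (σ.permMatrix ℝ)ᵀ) p q = F (σ p) (σ q) := by
  have hthis := conj_transpose_apply σ⁻¹ F p q
  have he : (σ⁻¹ : Equiv.Perm I).permMatrix ℝ = (σ.permMatrix ℝ)ᵀ := by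
    ext a b
    rw [permMatrix_apply, Matrix.transpose_apply, permMatrix_apply, Equiv.Perm.inv_def]
    by_cases h : b = σ.symm a
    · rw [if_pos h, if_pos (by rw [h]; simp)]
    · rw [if_neg h, if_neg (fun hc => h (by rw [hc]; simp))]
  rw [he] at hthis
  rw [Matrix.transpose_transpose] at hthis
  simpa [Equiv.Perm.inv_def] using hthis

lemma mul_permMatrix_transpose_apply {I : Type*} [DecidableEq I] [Fintype I] (σ : Equiv.Perm I)
    (M : Matrix I I ℝ) (p q : I) :
    (M * (σ.permMatrix ℝ)ᵀ) p q = M p (σ q) := by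
  rw [Matrix.mul_apply]
  have h1 : ∀ r, M p r * (σ.permMatrix ℝ)ᵀ r q = if r = σ q then M p r else 0 := by
    intro r
    rw [Matrix.transpose_apply, permMatrix_apply]
    by_cases h : r = σ q
    · rw [if_pos h, if_pos h, mul_one]
    · rw [if_neg h, if_neg h, mul_zero]
  simp_rw [h1]
  rw [Finset.sum_ite_eq' Finset.univ (σ q), if_pos (Finset.mem_univ _)]

lemma eq_blockDiagonal' {D : Matrix (BlkIdx n) (BlkIdx n) ℝ} (hD : IsBlockDiag D) :
    D = Matrix.blockDiagonal' (fun j => dblock D j) := by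
  ext p q
  obtain ⟨j, x⟩ := p
  obtain ⟨k, y⟩ := q
  by_cases h : j = k
  · subst h
    rw [Matrix.blockDiagonal'_apply_eq]
    rfl
  · rw [Matrix.blockDiagonal'_apply_ne _ _ _ h]
    exact hD _ _ h

lemma isBlockDiag_blockDiagonal' (d : ∀ j, Matrix (Fin (n j)) (Fin (n j)) ℝ) :
    IsBlockDiag (Matrix.blockDiagonal' d) := by
  intro p q h
  obtain ⟨j, x⟩ := p
  obtain ⟨k, y⟩ := q
  exact Matrix.blockDiagonal'_apply_ne _ _ _ h

lemma exists_bd_inverse {D : Matrix (BlkIdx n) (BlkIdx n) ℝ} (hD : IsBlockDiag D)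
    (hU : IsUnit D) : ∃ E : Matrix (BlkIdx n) (BlkIdx n) ℝ,
      IsBlockDiag E ∧ D * E = 1 ∧ E * D = 1 := by
  have hblk : ∀ j, IsUnit (dblock D j) := by
    intro j
    rw [← Matrix.mulVec_injective_iff_isUnit]
    have hDinj : Function.Injective D.mulVec := Matrix.mulVec_injective_iff_isUnit.mpr hU
    intro v w hvw
    set s : Fin (n j) → ℝ := v - w with hs
    set u : BlkIdx n → ℝ := fun p => dite (p.1 = j) (fun h => s (h ▸ p.2)) (fun _ => 0) with hu
    have hDu : D.mulVec u = 0 := by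
      funext p
      obtain ⟨k, x⟩ := p
      rw [Matrix.mulVec, dotProduct, ← Finset.univ_sigma_univ, Finset.sum_sigma]
      rw [Finset.sum_eq_single j]
      · by_cases h : k = j
        · subst h
          have he : ∀ y : Fin (n k), D ⟨k, x⟩ ⟨k, y⟩ * u ⟨k, y⟩ = dblock D k x y * s y := by
            intro y
            rw [hu]
            simp only [dif_pos rfl]
            rfl
          simp_rw [he]
          have h2 : ∑ y, dblock D k x y * s y
              = ((dblock D k).mulVec v - (dblock D k).mulVec w) x := by
            rw [← Matrix.mulVec_sub]
            rfl
          rw [h2, hvw, sub_self]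
          rfl
        · apply Finset.sum_eq_zero
          intro y _
          rw [hD ⟨k, x⟩ ⟨j, y⟩ h, zero_mul]
      · intro q _ hq
        apply Finset.sum_eq_zero
        intro y _
        have h3 : u ⟨q, y⟩ = 0 := by rw [hu]; exact dif_neg hq
        rw [h3, mul_zero]
      · intro h; exact absurd (Finset.mem_univ _) h
    have hu0 : u = 0 := hDinj (a₁ := u) (a₂ := 0) (by rw [hDu, Matrix.mulVec_zero])
    have hsz : s = 0 := by
      funext y
      have := congrFun hu0 ⟨j, y⟩
      rw [hu] at this
      simpa using this
    rw [hs] at hsz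
    exact sub_eq_zero.mp hsz
  refine ⟨Matrix.blockDiagonal' (fun j => (dblock D j)⁻¹), isBlockDiag_blockDiagonal' _, ?_, ?_⟩
  · nth_rewrite 1 [eq_blockDiagonal' hD]
    rw [← Matrix.blockDiagonal'_mul]
    have h4 : (fun k => dblock D k * (dblock D k)⁻¹) = fun _ => (1 : Matrix _ _ ℝ) := by
      funext k
      exact Matrix.mul_nonsing_inv _ ((Matrix.isUnit_iff_isUnit_det _).mp (hblk k))
    rw [h4]; exact Matrix.blockDiagonal'_one
  · nth_rewrite 2 [eq_blockDiagonal' hD]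
    rw [← Matrix.blockDiagonal'_mul]
    have h4 : (fun k => (dblock D k)⁻¹ * dblock D k) = fun _ => (1 : Matrix _ _ ℝ) := by
      funext k
      exact Matrix.nonsing_inv_mul _ ((Matrix.isUnit_iff_isUnit_det _).mp (hblk k))
    rw [h4]; exact Matrix.blockDiagonal'_one

lemma sigma_fin_ext {a b : Fin t} {x : Fin (n a)} {y : Fin (n b)}
    (h : a = b) (h2 : (x : ℕ) = (y : ℕ)) : (⟨a, x⟩ : BlkIdx n) = ⟨b, y⟩ := by
  subst h
  exact congrArg _ (Fin.ext h2)

end Aux7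

/-- Core structure lemma: if `X` is invertible with inverse `Y` and congruence by `X`
maps the block-diagonal family `Dm` to the block-diagonal family `Em`, then `X` factors
as a block-diagonal matrix times a block-structure-preserving permutation matrix. -/
lemma core_X {t m : ℕ} {n : Fin t → ℕ} (hn : ∀ j, 0 < n j)
    (Dm Em : Fin m → Matrix (BlkIdx n) (BlkIdx n) ℝ)
    (hDd : ∀ i, IsBlockDiag (Dm i)) (hEd : ∀ i, IsBlockDiag (Em i))
    (Ab : ∀ j : Fin t, Fin m → Matrix (Fin (n j)) (Fin (n j)) ℝ)
    (hAb : ∀ j i, Ab j i = dblock (Dm i) j)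
    (hdim : ∀ j, Module.finrank ℝ (nSubmodule (Ab j)) = 1)
    (homega : 0 < omegaUniq Ab)
    (X Y : Matrix (BlkIdx n) (BlkIdx n) ℝ) (hXY : X * Y = 1) (hYX : Y * X = 1)
    (hE : ∀ i, Xᵀ * Dm i * X = Em i) :
    ∃ D P : Matrix (BlkIdx n) (BlkIdx n) ℝ,
      IsBlockDiag D ∧ IsUnit D ∧ IsBDPerm P ∧
      (∀ F, IsBlockDiag F → IsBlockDiag (P * F * Pᵀ)) ∧
      P * Pᵀ = 1 ∧ Pᵀ * P = 1 ∧ X = D * P := by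
  have hXu : IsUnit X := (Matrix.isUnit_iff_isUnit_det _).mpr (Matrix.isUnit_det_of_right_inverse hXY)
  -- the two key matrix identities
  have key1 : ∀ i, Dm i * X = Yᵀ * Em i := by
    intro i
    rw [← hE i]
    calc Dm i * X = ((X * Y)ᵀ) * (Dm i * X) := by
          rw [hXY, Matrix.transpose_one, Matrix.one_mul]
      _ = Yᵀ * (Xᵀ * Dm i * X) := by
          rw [Matrix.transpose_mul]
          simp only [Matrix.mul_assoc]
  have hET : ∀ i, Xᵀ * (Dm i)ᵀ * X = (Em i)ᵀ := by
    intro i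
    rw [← hE i]
    simp only [Matrix.transpose_mul, Matrix.transpose_transpose, Matrix.mul_assoc]
  have key2 : ∀ i, (Dm i)ᵀ * X = Yᵀ * (Em i)ᵀ := by
    intro i
    rw [← hET i]
    calc (Dm i)ᵀ * X = ((X * Y)ᵀ) * ((Dm i)ᵀ * X) := by
          rw [hXY, Matrix.transpose_one, Matrix.one_mul]
      _ = Yᵀ * (Xᵀ * (Dm i)ᵀ * X) := by
          rw [Matrix.transpose_mul]
          simp only [Matrix.mul_assoc]
  -- blockwise versions
  have blk1 : ∀ i j q, Ab j i * blkM X j q = (blkM Y q j)ᵀ * blkM (Em i) q q := by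
    intro i j q
    have h := congrArg (fun M => blkM M j q) (key1 i)
    rw [bd_mul_blkM (hDd i) X j q, blkM_mul_bd (hEd i) Yᵀ j q, blkM_transpose] at h
    rw [hAb]
    exact h
  have blk2 : ∀ i j q, (Ab j i)ᵀ * blkM X j q = (blkM Y q j)ᵀ * (blkM (Em i) q q)ᵀ := by
    intro i j q
    have h := congrArg (fun M => blkM M j q) (key2 i)
    rw [bd_mul_blkM (isBlockDiag_transpose (hDd i)) X j q,
      blkM_mul_bd (isBlockDiag_transpose (hEd i)) Yᵀ j q, blkM_transpose Y,
      blkM_transpose (Dm i), blkM_transpose (Em i)] at h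
    rw [hAb]
    exact h
  -- pairwise equations
  have eqA : ∀ (i : Fin m) (j k q : Fin t),
      Ab j i * (blkM X j q * blkM Y q k) = (blkM X k q * blkM Y q j)ᵀ * Ab k i := by
    intro i j k q
    have h1 := blk1 i j q
    have h2 := blk2 i k q
    have h2' : (blkM X k q)ᵀ * Ab k i = blkM (Em i) q q * blkM Y q k := by
      have h3 := congrArg Matrix.transpose h2
      simp only [Matrix.transpose_mul, Matrix.transpose_transpose] at h3
      exact h3
    calc Ab j i * (blkM X j q * blkM Y q k)
        = (Ab j i * blkM X j q) * blkM Y q k := by rw [Matrix.mul_assoc]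
      _ = (blkM Y q j)ᵀ * blkM (Em i) q q * blkM Y q k := by rw [h1]
      _ = (blkM Y q j)ᵀ * ((blkM X k q)ᵀ * Ab k i) := by rw [Matrix.mul_assoc, ← h2']
      _ = (blkM X k q * blkM Y q j)ᵀ * Ab k i := by
          rw [Matrix.transpose_mul, Matrix.mul_assoc]
  have eqB : ∀ (i : Fin m) (j k q : Fin t),
      (Ab j i)ᵀ * (blkM X j q * blkM Y q k) = (blkM X k q * blkM Y q j)ᵀ * (Ab k i)ᵀ := by
    intro i j k q
    have h2 := blk2 i j q
    have h1 := blk1 i k q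
    have h1' : (blkM X k q)ᵀ * (Ab k i)ᵀ = (blkM (Em i) q q)ᵀ * blkM Y q k := by
      have h3 := congrArg Matrix.transpose h1
      simp only [Matrix.transpose_mul, Matrix.transpose_transpose] at h3
      exact h3
    calc (Ab j i)ᵀ * (blkM X j q * blkM Y q k)
        = ((Ab j i)ᵀ * blkM X j q) * blkM Y q k := by rw [Matrix.mul_assoc]
      _ = (blkM Y q j)ᵀ * (blkM (Em i) q q)ᵀ * blkM Y q k := by rw [h2]
      _ = (blkM Y q j)ᵀ * ((blkM X k q)ᵀ * (Ab k i)ᵀ) := by rw [Matrix.mul_assoc, ← h1']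
      _ = (blkM X k q * blkM Y q j)ᵀ * (Ab k i)ᵀ := by
          rw [Matrix.transpose_mul, Matrix.mul_assoc]
  -- off-diagonal products vanish
  have hzero : ∀ j k q : Fin t, j ≠ k → blkM X j q * blkM Y q k = 0 := by
    intro j k q hjk
    rcases lt_or_gt_of_ne hjk with h | h
    · exact (Gjk_trivial_kernel (sigmaMin_Gjk_pos homega h)
        (blkM X j q * blkM Y q k) (blkM X k q * blkM Y q j)
        (fun i => eqA i j k q) (fun i => eqB i j k q)).1
    · exact (Gjk_trivial_kernel (sigmaMin_Gjk_pos homega h)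
        (blkM X k q * blkM Y q j) (blkM X j q * blkM Y q k)
        (fun i => eqA i k j q) (fun i => eqB i k j q)).2
  -- diagonal products are scalars
  have hcex : ∀ j q, ∃ c : ℝ, blkM X j q * blkM Y q j = c • 1 := by
    intro j q
    apply exists_smul_one_of_mem (hn j) (Ab j) (hdim j)
    intro i
    rw [eqA i j j q, sub_self]
  choose c hc using hcex
  -- block identities of products
  have hXYb : ∀ j k, (∑ q, blkM X j q * blkM Y q k)
      = blkM (1 : Matrix (BlkIdx n) (BlkIdx n) ℝ) j k := by
    intro j k; rw [← blkM_mul, hXY]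
  have hYXb : ∀ q q', (∑ k, blkM Y q k * blkM X k q')
      = blkM (1 : Matrix (BlkIdx n) (BlkIdx n) ℝ) q q' := by
    intro q q'; rw [← blkM_mul, hYX]
  have hsum : ∀ j, (∑ q, c j q) = 1 := by
    intro j
    have h := hXYb j j
    rw [blkM_one_diag] at h
    have h2 : (∑ q, c j q) • (1 : Matrix (Fin (n j)) (Fin (n j)) ℝ) = 1 := by
      rw [Finset.sum_smul,
        show (∑ q, c j q • (1 : Matrix (Fin (n j)) (Fin (n j)) ℝ))
            = ∑ q, blkM X j q * blkM Y q j from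
          Finset.sum_congr rfl (fun q _ => (hc j q).symm), h]
    have h3 : (∑ q, c j q) • (1 : Matrix (Fin (n j)) (Fin (n j)) ℝ) = (1 : ℝ) • 1 := by
      rw [h2, one_smul]
    exact smul_one_inj (hn j) h3
  have keyc : ∀ j q q', blkM X j q * (∑ k, blkM Y q k * blkM X k q') * blkM Y q' j
      = (c j q * c j q') • 1 := by
    intro j q q'
    rw [Matrix.mul_sum, Matrix.sum_mul]
    rw [Finset.sum_eq_single j]
    · calc blkM X j q * (blkM Y q j * blkM X j q') * blkM Y q' j
          = (blkM X j q * blkM Y q j) * (blkM X j q' * blkM Y q' j) := by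
            simp only [Matrix.mul_assoc]
        _ = (c j q • 1) * (c j q' • 1) := by rw [hc, hc]
        _ = (c j q * c j q') • 1 := by
            rw [Matrix.smul_mul, Matrix.mul_smul, Matrix.one_mul, smul_smul]
    · intro k _ hk
      calc blkM X j q * (blkM Y q k * blkM X k q') * blkM Y q' j
          = (blkM X j q * blkM Y q k) * (blkM X k q' * blkM Y q' j) := by
            simp only [Matrix.mul_assoc]
        _ = 0 := by rw [hzero j k q (Ne.symm hk), Matrix.zero_mul]
    · intro h; exact absurd (Finset.mem_univ _) h
  have hmulc : ∀ j q q', q ≠ q' → c j q * c j q' = 0 := by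
    intro j q q' h
    have hk := keyc j q q'
    rw [hYXb q q', blkM_one_off h, Matrix.mul_zero, Matrix.zero_mul] at hk
    have h0 : (0 : ℝ) • (1 : Matrix (Fin (n j)) (Fin (n j)) ℝ) = (c j q * c j q') • 1 := by
      rw [zero_smul, hk]
    exact (smul_one_inj (hn j) h0).symm
  have hidem : ∀ j q, c j q * c j q = c j q := by
    intro j q
    have hk := keyc j q q
    rw [hYXb q q, blkM_one_diag, Matrix.mul_one, hc j q] at hk
    exact (smul_one_inj (hn j) hk).symm
  have c01 : ∀ j q, c j q = 0 ∨ c j q = 1 := by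
    intro j q
    have h := hidem j q
    have h2 : c j q * (c j q - 1) = 0 := by
      rw [mul_sub, mul_one, h, sub_self]
    rcases mul_eq_zero.mp h2 with h0 | h1
    · exact Or.inl h0
    · exact Or.inr (by linarith [sub_eq_zero.mp h1])
  have hπex : ∀ j, ∃ q, c j q = 1 := by
    intro j
    by_contra hcon
    push_neg at hcon
    have hz : ∀ q, c j q = 0 := fun q => (c01 j q).resolve_right (hcon q)
    have hs := hsum j
    rw [Finset.sum_congr rfl (fun q _ => hz q), Finset.sum_const_zero] at hs
    exact zero_ne_one hs
  choose π hπ using hπex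
  have huniq : ∀ j q, c j q ≠ 0 → q = π j := by
    intro j q hq
    by_contra hne
    have h := hmulc j q (π j) hne
    rw [hπ j, mul_one] at h
    exact hq h
  have htr : ∀ q, ((n q : ℝ)) = ∑ j, c j q * (n j : ℝ) := by
    intro q
    have h := hYXb q q
    rw [blkM_one_diag] at h
    have h2 := congrArg Matrix.trace h
    rw [Matrix.trace_sum, Matrix.trace_one] at h2
    have h3 : ∀ j, Matrix.trace (blkM Y q j * blkM X j q) = c j q * (n j : ℝ) := by
      intro j
      rw [Matrix.trace_mul_comm, hc j q, Matrix.trace_smul, Matrix.trace_one]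
      simp [Fintype.card_fin]
    rw [Finset.sum_congr rfl (fun j _ => h3 j)] at h2
    simpa [Fintype.card_fin] using h2.symm
  have hsurj : Function.Surjective π := by
    intro q
    by_contra hcon
    push_neg at hcon
    have hzc : ∀ j, c j q = 0 := by
      intro j
      by_contra hne
      exact hcon j (huniq j q hne).symm
    have h := htr q
    rw [Finset.sum_congr rfl (fun j _ => by rw [hzc j, zero_mul]),
      Finset.sum_const_zero] at h
    have hq := hn q
    have : (0 : ℝ) < (n q : ℝ) := by exact_mod_cast hq
    rw [h] at this
    exact lt_irrefl _ this
  have hbij : Function.Bijective π := Finite.surjective_iff_bijective.mp hsurj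
  have hinj := hbij.injective
  have hsize : ∀ j, n (π j) = n j := by
    intro j
    have h := htr (π j)
    rw [Finset.sum_eq_single j] at h
    · rw [hπ j, one_mul] at h
      exact_mod_cast h
    · intro k _ hk
      have hck : c k (π j) = 0 := by
        by_contra hne
        exact hk (hinj (huniq k (π j) hne).symm)
      rw [hck, zero_mul]
    · intro h'; exact absurd (Finset.mem_univ _) h'
  have hXzero : ∀ j q, q ≠ π j → blkM X j q = 0 := by
    intro j q hq
    have hc0 : c j q = 0 := by
      by_contra hne; exact hq (huniq j q hne)
    have h1 : blkM X j q * (∑ k, blkM Y q k * blkM X k q) = blkM X j q := by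
      rw [hYXb q q, blkM_one_diag, Matrix.mul_one]
    rw [Matrix.mul_sum] at h1
    rw [Finset.sum_eq_single j] at h1
    · rw [← Matrix.mul_assoc, hc j q, hc0, zero_smul, Matrix.zero_mul] at h1
      exact h1.symm
    · intro k _ hk
      rw [← Matrix.mul_assoc, hzero j k q (Ne.symm hk), Matrix.zero_mul]
    · intro h'; exact absurd (Finset.mem_univ _) h'
  -- build the permutation
  set f : BlkIdx n → BlkIdx n := fun p => ⟨π p.1, Fin.cast (hsize p.1).symm p.2⟩ with hf
  have hfinj : Function.Injective f := by
    rintro ⟨j, x⟩ ⟨k, y⟩ h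
    have h1 : π j = π k := congrArg Sigma.fst h
    have hjk : j = k := hinj h1
    subst hjk
    have h2 := sigma_mk_injective h
    have h3 : (x : ℕ) = (y : ℕ) := by
      have := congrArg Fin.val h2
      simpa using this
    exact congrArg _ (Fin.ext h3)
  have hfsurj : Function.Surjective f := by
    rintro ⟨q, y⟩
    obtain ⟨j, hj⟩ := hsurj q
    have hnq : n q = n j := by rw [← hj, hsize j]
    refine ⟨⟨j, Fin.cast hnq y⟩, ?_⟩
    exact sigma_fin_ext hj (by simp)
  set σ : Equiv.Perm (BlkIdx n) := Equiv.ofBijective f ⟨hfinj, hfsurj⟩ with hσ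
  have hσ1 : ∀ p : BlkIdx n, (σ p).1 = π p.1 := fun p => rfl
  set P : Matrix (BlkIdx n) (BlkIdx n) ℝ := σ.permMatrix ℝ with hP
  have hPt : Pᵀ * P = 1 := permMatrix_transpose_mul σ
  have hPt2 : P * Pᵀ = 1 := permMatrix_mul_transpose σ
  set D : Matrix (BlkIdx n) (BlkIdx n) ℝ := X * Pᵀ with hD
  have hXD : X = D * P := by rw [hD, Matrix.mul_assoc, hPt, Matrix.mul_one]
  have hDbd : IsBlockDiag D := by
    rintro ⟨j, x⟩ ⟨k, y⟩ hjk
    rw [hD, hP, mul_permMatrix_transpose_apply σ X]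
    have hσk : σ (⟨k, y⟩ : BlkIdx n) = ⟨π k, Fin.cast (hsize k).symm y⟩ := rfl
    rw [hσk]
    have hz := hXzero j (π k) (fun hcon => hjk (hinj hcon).symm)
    have := congrFun (congrFun hz x) (Fin.cast (hsize k).symm y)
    exact this
  have hPunit : IsUnit P := (Matrix.isUnit_iff_isUnit_det _).mpr (Matrix.isUnit_det_of_right_inverse hPt2)
  have hPtunit : IsUnit Pᵀ := (Matrix.isUnit_iff_isUnit_det _).mpr (Matrix.isUnit_det_of_right_inverse hPt)
  have hDu : IsUnit D := by rw [hD]; exact hXu.mul hPtunit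
  have hBDP : IsBDPerm P := by
    refine ⟨⟨σ, hP⟩, ?_⟩
    intro F hF
    intro p q hne
    rw [hP, conj_transpose_apply]
    apply hF
    intro hcon
    apply hne
    have h2 : ∀ r : BlkIdx n, r.1 = π ((σ.symm r).1) := by
      intro r
      conv_lhs => rw [← σ.apply_symm_apply r]
      exact hσ1 _
    rw [h2 p, h2 q, hcon]
  have hconjP : ∀ F, IsBlockDiag F → IsBlockDiag (P * F * Pᵀ) := by
    intro F hF p q hne
    rw [hP, conj_apply']
    apply hF
    intro hcon
    apply hne
    have hcon' : π p.1 = π q.1 := by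
      rw [← hσ1 p, ← hσ1 q, hcon]
    exact hinj hcon'
  exact ⟨D, P, hDbd, hDu, hBDP, hconjP, hPt2, hPt, hXD⟩


/-- Corollary 2.4(a): if `dim 𝒩(𝒜_j) = 1` for all `j` and
`ω_uniq(𝒜;W) > 0`, then `𝒜` is uniquely `τ_n`-block diagonalizable. -/
theorem uniquelyBD_of_omegaUniq_pos {t m : ℕ} {n : Fin t → ℕ} (hn : ∀ j, 0 < n j)
    (A : Fin m → Matrix (BlkIdx n) (BlkIdx n) ℝ)
    (W : Matrix (BlkIdx n) (BlkIdx n) ℝ) (hWmem : MemW W) (hW : IsDiagonalizer A W)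
    (Ab : ∀ j : Fin t, Fin m → Matrix (Fin (n j)) (Fin (n j)) ℝ)
    (hAb : ∀ j i, Ab j i = dblock (Wᵀ * A i * W) j)
    (hdim : ∀ j, Module.finrank ℝ (nSubmodule (Ab j)) = 1)
    (homega : 0 < omegaUniq Ab) :
    UniquelyBD A := by
  have hcore : ∀ V : Matrix (BlkIdx n) (BlkIdx n) ℝ, IsDiagonalizer A V →
      ∃ D P : Matrix (BlkIdx n) (BlkIdx n) ℝ,
        IsBlockDiag D ∧ IsUnit D ∧ IsBDPerm P ∧
        (∀ F, IsBlockDiag F → IsBlockDiag (P * F * Pᵀ)) ∧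
        P * Pᵀ = 1 ∧ Pᵀ * P = 1 ∧ V = W * D * P := by
    intro V hV
    obtain ⟨hWu, hWd⟩ := hW
    obtain ⟨hVu, hVd⟩ := hV
    have hWdet : IsUnit W.det := (Matrix.isUnit_iff_isUnit_det W).mp hWu
    have hVdet : IsUnit V.det := (Matrix.isUnit_iff_isUnit_det V).mp hVu
    set X : Matrix (BlkIdx n) (BlkIdx n) ℝ := W⁻¹ * V with hXdef
    have hWX : W * X = V := by
      rw [hXdef, ← Matrix.mul_assoc, Matrix.mul_nonsing_inv _ hWdet, Matrix.one_mul]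
    set Y : Matrix (BlkIdx n) (BlkIdx n) ℝ := V⁻¹ * W with hYdef
    have hXY : X * Y = 1 := by
      rw [hXdef, hYdef, Matrix.mul_assoc, ← Matrix.mul_assoc V, Matrix.mul_nonsing_inv _ hVdet,
        Matrix.one_mul, Matrix.nonsing_inv_mul _ hWdet]
    have hYX : Y * X = 1 := by
      rw [hXdef, hYdef, Matrix.mul_assoc, ← Matrix.mul_assoc W, Matrix.mul_nonsing_inv _ hWdet,
        Matrix.one_mul, Matrix.nonsing_inv_mul _ hVdet]
    have hE : ∀ i, Xᵀ * (Wᵀ * A i * W) * X = Vᵀ * A i * V := by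
      intro i
      rw [← hWX]
      simp only [Matrix.transpose_mul, Matrix.mul_assoc]
    obtain ⟨D, P, hDbd, hDu, hBDP, hconjP, hPPt, hPtP, hXDP⟩ :=
      core_X hn (fun i => Wᵀ * A i * W) (fun i => Vᵀ * A i * V) hWd hVd Ab hAb hdim homega
        X Y hXY hYX hE
    refine ⟨D, P, hDbd, hDu, hBDP, hconjP, hPPt, hPtP, ?_⟩
    rw [← hWX, hXDP, Matrix.mul_assoc]
  constructor
  · exact ⟨W, hW⟩
  · intro W1 W2 h1 h2
    obtain ⟨D1, P1, hD1bd, hD1u, hBDP1, hconj1, hP1Pt, hP1tP, hW1⟩ := hcore W1 h1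
    obtain ⟨D2, P2, hD2bd, hD2u, hBDP2, hconj2, hP2Pt, hP2tP, hW2⟩ := hcore W2 h2
    obtain ⟨E1, hE1bd, hDE1, hED1⟩ := exists_bd_inverse hD1bd hD1u
    refine ⟨P1ᵀ * (E1 * D2) * P1, P1ᵀ * P2, ?_, ?_, ?_, ?_⟩
    · exact hBDP1.2 (E1 * D2) (isBlockDiag_mul hE1bd hD2bd)
    · have hE1u : IsUnit E1 := (Matrix.isUnit_iff_isUnit_det _).mpr (Matrix.isUnit_det_of_right_inverse hED1)
      have hP1u : IsUnit P1 := (Matrix.isUnit_iff_isUnit_det _).mpr (Matrix.isUnit_det_of_right_inverse hP1Pt)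
      have hP1tu : IsUnit P1ᵀ := (Matrix.isUnit_iff_isUnit_det _).mpr (Matrix.isUnit_det_of_right_inverse hP1tP)
      exact ((hP1tu.mul (hE1u.mul hD2u)).mul hP1u)
    · constructor
      · exact IsPermMatrix.mul (IsPermMatrix.transpose hBDP1.1) hBDP2.1
      · intro F hF
        have hrw : (P1ᵀ * P2)ᵀ * F * (P1ᵀ * P2) = P2ᵀ * (P1 * F * P1ᵀ) * P2 := by
          rw [Matrix.transpose_mul, Matrix.transpose_transpose]
          simp only [Matrix.mul_assoc]
        rw [hrw]
        exact hBDP2.2 _ (hconj1 F hF)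
    · rw [hW1, hW2]
      symm
      have cancel1 : ∀ M : Matrix (BlkIdx n) (BlkIdx n) ℝ, P1 * (P1ᵀ * M) = M := by
        intro M
        rw [← Matrix.mul_assoc, hP1Pt, Matrix.one_mul]
      have cancel2 : ∀ M : Matrix (BlkIdx n) (BlkIdx n) ℝ, D1 * (E1 * M) = M := by
        intro M
        rw [← Matrix.mul_assoc, hDE1, Matrix.one_mul]
      calc W * D1 * P1 * (P1ᵀ * (E1 * D2) * P1) * (P1ᵀ * P2)
          = W * (D1 * (P1 * (P1ᵀ * (E1 * (D2 * (P1 * (P1ᵀ * P2))))))) := by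
            simp only [Matrix.mul_assoc]
        _ = W * (D1 * (E1 * (D2 * P2))) := by rw [cancel1, cancel1]
        _ = W * (D2 * P2) := by rw [cancel2]
        _ = W * D2 * P2 := by rw [Matrix.mul_assoc]

end JBD
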